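/- For any integer p ≥ 1 and all n, N ≥ 1, b_n^N ≤ w_{⌈np⌉ + nN + N, p}, where b_n counts partially directed paths in the quadrant (wedge between X=0 and Y=0) ending on the line Y=0, and w_{m,p} counts partially directed paths of length m in the asymmetric wedge W_p. -/

import Mathlib

/-- Allowed steps: north, south, east. -/
def AllowedStep (s : ℤ × ℤ) : Prop := s = (0, 1) ∨ s = (0, -1) ∨ s = (1, 0)

/-- No north step immediately follows a south step or vice versa. -/
def NoReversal (l : List (ℤ × ℤ)) : Prop :=
  l.Chain' (fun s t => ¬(s = (0, 1) ∧ t = (0, -1)) ∧ ¬(s = (0, -1) ∧ t = (0, 1)))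

/-- A partially directed self-avoiding path of length `n`, encoded by its list of steps. -/
def IsPDPath (n : ℕ) (l : List (ℤ × ℤ)) : Prop :=
  l.length = n ∧ (∀ s ∈ l, AllowedStep s) ∧ NoReversal l

/-- The vertices visited by a path starting at the origin. -/
def pathVertices (l : List (ℤ × ℤ)) : List (ℤ × ℤ) := l.scanl (· + ·) (0, 0)

/-- Number of unrestricted partially directed paths of length `n`. -/
noncomputable def numPD (n : ℕ) : ℕ := Nat.card {l : List (ℤ × ℤ) // IsPDPath n l}

/-- Membership in the symmetric wedge `V_p`. -/
def InSymWedge (p : ℕ) (q : ℤ × ℤ) : Prop :=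
  0 ≤ q.1 ∧ -(p : ℤ) * q.1 ≤ q.2 ∧ q.2 ≤ (p : ℤ) * q.1

/-- Membership in the asymmetric wedge `W_p`. -/
def InAsymWedge (p : ℕ) (q : ℤ × ℤ) : Prop :=
  0 ≤ q.1 ∧ 0 ≤ q.2 ∧ q.2 ≤ (p : ℤ) * q.1

/-- Number of partially directed paths of length `n` confined to the symmetric wedge `V_p`. -/
noncomputable def numPDsym (p n : ℕ) : ℕ :=
  Nat.card {l : List (ℤ × ℤ) // IsPDPath n l ∧ ∀ q ∈ pathVertices l, InSymWedge p q}

/-- Number of partially directed paths of length `n` confined to the asymmetric wedge `W_p`. -/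
noncomputable def numPDasym (p n : ℕ) : ℕ :=
  Nat.card {l : List (ℤ × ℤ) // IsPDPath n l ∧ ∀ q ∈ pathVertices l, InAsymWedge p q}

/-- Number of partially directed paths of length `n` in the quadrant (x ≥ 0 and y ≥ 0)
whose last vertex lies on the line `Y = 0`. -/
noncomputable def numPDquadEnd0 (n : ℕ) : ℕ :=
  Nat.card {l : List (ℤ × ℤ) //
    IsPDPath n l ∧ (∀ q ∈ pathVertices l, 0 ≤ q.1 ∧ 0 ≤ q.2) ∧ l.sum.2 = 0}

/-- Number of partially directed paths of length `n` lying on or above the line `Y = 0`. -/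
noncomputable def numPDhalf (n : ℕ) : ℕ :=
  Nat.card {l : List (ℤ × ℤ) // IsPDPath n l ∧ ∀ q ∈ pathVertices l, 0 ≤ q.2}

/-- Number of partially directed paths of length `n` lying on or above the line `Y = 0`
whose last vertex lies on the line `Y = 0`. -/
noncomputable def numPDhalfEnd0 (n : ℕ) : ℕ :=
  Nat.card {l : List (ℤ × ℤ) //
    IsPDPath n l ∧ (∀ q ∈ pathVertices l, 0 ≤ q.2) ∧ l.sum.2 = 0}
namespace QW

abbrev Rel : (ℤ × ℤ) → (ℤ × ℤ) → Prop :=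
  fun s t => ¬(s = (0, 1) ∧ t = (0, -1)) ∧ ¬(s = (0, -1) ∧ t = (0, 1))

lemma rel_right (x : ℤ × ℤ) : Rel x (1, 0) := by
  constructor <;> rintro ⟨h1, h2⟩ <;> simp [Prod.ext_iff] at h2

lemma rel_left (y : ℤ × ℤ) : Rel (1, 0) y := by
  constructor <;> rintro ⟨h1, h2⟩ <;> simp [Prod.ext_iff] at h1

lemma chain'_replicate (k : ℕ) : List.Chain' Rel (List.replicate k ((1, 0) : ℤ × ℤ)) := by
  induction k with
  | zero => exact List.IsChain.nil
  | succ k ih =>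
    rw [List.replicate_succ]
    exact List.isChain_cons.2 ⟨fun y _ => rel_left y, ih⟩

lemma head_join (L : List (List (ℤ × ℤ))) (h : ∀ l ∈ L, l.head? = some (1, 0)) :
    L.flatten = [] ∨ L.flatten.head? = some (1, 0) := by
  induction L with
  | nil => left; rfl
  | cons l L ih =>
    right
    have hl := h l (by simp)
    cases l with
    | nil => simp at hl
    | cons a t =>
      simp only [List.head?_cons, Option.some.injEq] at hl
      subst hl
      simp [List.flatten_cons]

lemma chain'_join (L : List (List (ℤ × ℤ))) (h1 : ∀ l ∈ L, List.Chain' Rel l)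
    (h2 : ∀ l ∈ L, l.head? = some (1, 0)) : List.Chain' Rel L.flatten := by
  induction L with
  | nil => exact List.IsChain.nil
  | cons l L ih =>
    rw [List.flatten_cons, show ∀ l, List.Chain' Rel l = List.IsChain Rel l from fun _ => rfl, List.isChain_append]
    refine ⟨h1 l (by simp), ih (fun x hx => h1 x (by simp [hx])) (fun x hx => h2 x (by simp [hx])), ?_⟩
    intro x _ y hy
    rcases head_join L (fun x hx => h2 x (by simp [hx])) with h | h
    · rw [h] at hy; simp at hy
    · rw [h] at hy; simp at hy; rw [← hy]; exact rel_right x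

lemma scanl_shift (l : List (ℤ × ℤ)) : ∀ (b a : ℤ × ℤ),
    List.scanl (· + ·) (a + b) l = (List.scanl (· + ·) b l).map (a + ·) := by
  induction l with
  | nil => intros; simp
  | cons s t ih =>
    intro b a
    simp only [List.scanl_cons, List.map_cons]
    rw [add_assoc, ih]

lemma mem_scanl_append (l₁ l₂ : List (ℤ × ℤ)) : ∀ (a q : ℤ × ℤ),
    q ∈ List.scanl (· + ·) a (l₁ ++ l₂) →
    q ∈ List.scanl (· + ·) a l₁ ∨ q ∈ List.scanl (· + ·) (a + l₁.sum) l₂ := by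
  induction l₁ with
  | nil => intro a q hq; right; simpa using hq
  | cons s t ih =>
    intro a q hq
    simp only [List.cons_append, List.scanl_cons, List.mem_cons] at hq ⊢
    rcases hq with rfl | hq
    · left; left; rfl
    · rcases ih (a + s) q hq with h | h
      · left; right; exact h
      · right
        rwa [List.sum_cons, ← add_assoc]

lemma scanl_snd_le (l : List (ℤ × ℤ)) (h : ∀ s ∈ l, AllowedStep s) :
    ∀ (a : ℤ × ℤ), ∀ q ∈ List.scanl (· + ·) a l, q.2 ≤ a.2 + l.length := by
  induction l with
  | nil => intro a q hq; simp at hq; simp [hq]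
  | cons s t ih =>
    intro a q hq
    simp only [List.scanl_cons, List.mem_cons] at hq
    have hs : s.2 ≤ 1 := by
      rcases h s (by simp) with rfl | rfl | rfl <;> norm_num
    rcases hq with rfl | hq
    · simp; omega
    · have := ih (fun x hx => h x (by simp [hx])) (a + s) q hq
      simp at this ⊢
      omega

lemma mem_scanl_replicate (k : ℕ) : ∀ (a : ℤ × ℤ),
    ∀ q ∈ List.scanl (· + ·) a (List.replicate k ((1, 0) : ℤ × ℤ)), q.2 = a.2 ∧ a.1 ≤ q.1 := by
  induction k with
  | zero => intro a q hq; simp at hq; simp [hq]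
  | succ k ih =>
    intro a q hq
    rw [List.replicate_succ] at hq
    simp only [List.scanl_cons, List.mem_cons] at hq
    rcases hq with rfl | hq
    · exact ⟨rfl, le_refl _⟩
    · have := ih (a + (1, 0)) q hq
      simp at this
      exact ⟨this.1, by omega⟩

lemma sum_fst_nonneg (l : List (ℤ × ℤ)) (h : ∀ s ∈ l, AllowedStep s) : 0 ≤ l.sum.1 := by
  induction l with
  | nil => simp
  | cons s t ih =>
    have hs : 0 ≤ s.1 := by rcases h s (by simp) with rfl | rfl | rfl <;> norm_num
    have := ih (fun x hx => h x (by simp [hx]))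
    simp only [List.sum_cons, Prod.fst_add]
    omega

lemma flatten_wedge (p n : ℕ) (hp : 1 ≤ p) (L : List (List (ℤ × ℤ)))
    (hb : ∀ l ∈ L, l.sum.2 = 0 ∧ 0 ≤ l.sum.1 ∧
      ∀ v ∈ List.scanl (· + ·) ((0, 0) : ℤ × ℤ) l, 0 ≤ v.1 ∧ 0 ≤ v.2 ∧ v.2 ≤ (n : ℤ)) :
    ∀ (a : ℤ × ℤ), a.2 = 0 → (n : ℤ) ≤ a.1 →
    ∀ q ∈ List.scanl (· + ·) a L.flatten, InAsymWedge p q := by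
  induction L with
  | nil =>
    intro a ha2 ha1 q hq
    have hqa : q = a := by simpa using hq
    subst hqa
    have hn0 : (0:ℤ) ≤ q.1 := le_trans (by positivity) ha1
    exact ⟨hn0, by omega, by rw [ha2]; exact mul_nonneg (by positivity) hn0⟩
  | cons l L ih =>
    intro a ha2 ha1 q hq
    rw [List.flatten_cons] at hq
    rcases mem_scanl_append l L.flatten a q hq with h | h
    · have hrw : List.scanl (· + ·) a l = (List.scanl (· + ·) ((0,0) : ℤ×ℤ) l).map (a + ·) := by
        have := scanl_shift l (0, 0) a
        rwa [show a + ((0,0):ℤ×ℤ) = a from Prod.ext (by simp) (by simp)] at this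
      rw [hrw, List.mem_map] at h
      obtain ⟨v, hv, rfl⟩ := h
      obtain ⟨hv1, hv2, hv3⟩ := (hb l (by simp)).2.2 v hv
      have hp' : (1:ℤ) ≤ (p:ℤ) := by exact_mod_cast hp
      refine ⟨by simp; omega, by simp [ha2]; omega, ?_⟩
      have h1 : (n:ℤ) ≤ (a + v).1 := by simp; omega
      have h0 : (0:ℤ) ≤ (a + v).1 := le_trans (by positivity) h1
      have h2 : (a + v).2 ≤ (n:ℤ) := by simp [ha2]; omega
      nlinarith
    · obtain ⟨hs2, hs1, _⟩ := hb l (by simp)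
      exact ih (fun x hx => hb x (by simp [hx])) (a + l.sum)
        (by simp [ha2, hs2]) (by simp; omega) q h

lemma flatten_eq_of_fixed_length (k : ℕ) : ∀ (L₁ L₂ : List (List (ℤ × ℤ))),
    (∀ l ∈ L₁, l.length = k) → (∀ l ∈ L₂, l.length = k) → L₁.length = L₂.length →
    L₁.flatten = L₂.flatten → L₁ = L₂ := by
  intro L₁
  induction L₁ with
  | nil => intro L₂ _ _ hlen _; cases L₂ <;> simp_all
  | cons l L ih =>
    intro L₂ h1 h2 hlen hj
    cases L₂ with
    | nil => simp at hlen
    | cons l₂ M =>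
      simp only [List.flatten_cons] at hj
      have hll : l.length = l₂.length := by
        rw [h1 l (by simp), h2 l₂ (by simp)]
      obtain ⟨he, ht⟩ := List.append_inj hj hll
      subst he
      have := ih M (fun x hx => h1 x (by simp [hx])) (fun x hx => h2 x (by simp [hx]))
        (by simpa using hlen) ht
      rw [this]

lemma finite_paths (P : List (ℤ × ℤ) → Prop) (m : ℕ)
    (hP : ∀ l, P l → l.length = m ∧ ∀ s ∈ l, AllowedStep s) :
    Finite {l : List (ℤ × ℤ) // P l} := by
  have hS : Finite {s : ℤ × ℤ // AllowedStep s} := by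
    have : {s : ℤ × ℤ | AllowedStep s} = {(0, 1), (0, -1), (1, 0)} := by
      ext s; simp [AllowedStep, Set.mem_insert_iff]
    have hf : {s : ℤ × ℤ | AllowedStep s}.Finite := by
      rw [this]; exact (Set.finite_singleton _).insert _ |>.insert _
    exact hf.to_subtype
  apply Finite.of_injective (fun x : {l : List (ℤ × ℤ) // P l} =>
    (fun i : Fin m => (⟨x.1.get ⟨i, by rw [(hP x.1 x.2).1]; exact i.2⟩,
      (hP x.1 x.2).2 _ (x.1.get_mem _)⟩ : {s : ℤ × ℤ // AllowedStep s})))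
  intro x y hxy
  apply Subtype.ext
  apply List.ext_get (by rw [(hP x.1 x.2).1, (hP y.1 y.2).1])
  intro i h1 h2
  have := congrFun hxy ⟨i, by rw [← (hP x.1 x.2).1]; exact h1⟩
  exact congrArg Subtype.val this

end QW
theorem quadrant_to_asymWedge (p : ℕ) (hp : 1 ≤ p) (n N : ℕ) (hn : 1 ≤ n) (hN : 1 ≤ N) :
    numPDquadEnd0 n ^ N ≤ numPDasym p (n * p + n * N + N) := by
  classical
  set m := n * p + n * N + N with hm
  haveI hQfin : Finite {l : List (ℤ × ℤ) //
      IsPDPath m l ∧ ∀ q ∈ pathVertices l, InAsymWedge p q} :=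
    QW.finite_paths _ m (fun l hl => ⟨hl.1.1, hl.1.2.1⟩)
  set P := {l : List (ℤ × ℤ) //
      IsPDPath n l ∧ (∀ q ∈ pathVertices l, 0 ≤ q.1 ∧ 0 ≤ q.2) ∧ l.sum.2 = 0} with hP
  set Q := {l : List (ℤ × ℤ) //
      IsPDPath m l ∧ ∀ q ∈ pathVertices l, InAsymWedge p q} with hQdef
  -- the embedding
  have hblocklen : ∀ (f : Fin N → P) (i : Fin N), (((1,0) : ℤ × ℤ) :: (f i).1).length = n + 1 :=
    fun f i => by simp [(f i).2.1.1]
  have key : ∀ f : Fin N → P,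
      IsPDPath m (List.replicate (n*p) ((1,0) : ℤ × ℤ) ++
        (List.ofFn fun i => ((1,0) : ℤ × ℤ) :: (f i).1).flatten) ∧
      ∀ q ∈ pathVertices (List.replicate (n*p) ((1,0) : ℤ × ℤ) ++
        (List.ofFn fun i => ((1,0) : ℤ × ℤ) :: (f i).1).flatten), InAsymWedge p q := by
    intro f
    set L := List.ofFn fun i => ((1,0) : ℤ × ℤ) :: (f i).1 with hL
    have hLmem : ∀ l ∈ L, ∃ i, l = ((1,0) : ℤ × ℤ) :: (f i).1 := by
      intro l hl
      rw [hL, List.mem_ofFn] at hl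
      obtain ⟨i, rfl⟩ := hl
      exact ⟨i, rfl⟩
    have hflatlen : L.flatten.length = N * (n + 1) := by
      rw [List.length_flatten, hL, List.map_ofFn, List.sum_ofFn]
      simp only [Function.comp]
      rw [Finset.sum_congr rfl (fun i _ => hblocklen f i)]
      simp [mul_comm]
    refine ⟨⟨?_, ?_, ?_⟩, ?_⟩
    · -- length
      rw [List.length_append, List.length_replicate, hflatlen, hm]
      ring
    · -- allowed steps
      intro s hs
      rw [List.mem_append] at hs
      rcases hs with hs | hs
      · rw [List.eq_of_mem_replicate hs]; right; right; rfl
      · rw [List.mem_flatten] at hs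
        obtain ⟨l, hl, hsl⟩ := hs
        obtain ⟨i, rfl⟩ := hLmem l hl
        rcases hsl with _ | hsl
        · right; right; rfl
        · exact (f i).2.1.2.1 s (by assumption)
    · -- no reversal
      show List.IsChain QW.Rel _
      rw [List.isChain_append]
      refine ⟨QW.chain'_replicate _, ?_, ?_⟩
      · apply QW.chain'_join
        · intro l hl
          obtain ⟨i, rfl⟩ := hLmem l hl
          exact List.isChain_cons.2 ⟨fun y _ => QW.rel_left y, (f i).2.1.2.2⟩
        · intro l hl
          obtain ⟨i, rfl⟩ := hLmem l hl
          rfl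
      · intro x _ y hy
        rcases QW.head_join L (fun l hl => by obtain ⟨i, rfl⟩ := hLmem l hl; rfl) with h | h
        · rw [h] at hy; simp at hy
        · rw [h] at hy
          simp only [Option.mem_some_iff] at hy
          rw [← hy]; exact QW.rel_right x
    · -- wedge
      intro q hq
      have hsumrep : (List.replicate (n*p) ((1,0) : ℤ × ℤ)).sum = ((n*p : ℤ), 0) := by
        rw [List.sum_replicate]
        ext <;> simp
      rw [pathVertices] at hq
      rcases QW.mem_scanl_append _ _ _ _ hq with h | h
      · obtain ⟨h2, h1⟩ := QW.mem_scanl_replicate (n*p) (0,0) q h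
        refine ⟨by simpa using h1, by rw [h2], ?_⟩
        rw [h2]
        exact mul_nonneg (by positivity) (by simpa using h1)
      · apply QW.flatten_wedge p n hp L ?_ ((0,0) + ((n*p : ℤ), 0)) (by simp) ?_ q
          (by rwa [hsumrep] at h)
        · intro l hl
          obtain ⟨i, rfl⟩ := hLmem l hl
          refine ⟨?_, ?_, ?_⟩
          · rw [List.sum_cons]
            have := (f i).2.2.2
            simp [this]
          · apply QW.sum_fst_nonneg
            intro s hs
            rcases hs with _ | hs
            · right; right; rfl
            · exact (f i).2.1.2.1 s (by assumption)
          · intro v hv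
            simp only [List.scanl_cons, List.mem_cons] at hv
            rcases hv with rfl | hv
            · exact ⟨le_refl 0, le_refl 0, by positivity⟩
            · have heq : ((0,0) : ℤ × ℤ) + (1,0) = (1,0) + (0,0) := by ring
              rw [heq, QW.scanl_shift, List.mem_map] at hv
              obtain ⟨w, hw, rfl⟩ := hv
              have hq1 := (f i).2.2.1 w hw
              have hq2 := QW.scanl_snd_le (f i).1 (f i).2.1.2.1 (0,0) w hw
              rw [(f i).2.1.1] at hq2
              simp only [Prod.fst_add, Prod.snd_add] at *
              refine ⟨by norm_num; omega, by norm_num; omega, by norm_num; omega⟩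
        · have : (n : ℤ) ≤ (n*p : ℕ) := by
            exact_mod_cast Nat.le_mul_of_pos_right n (by omega)
          simpa using this
  let F : (Fin N → P) → Q := fun f =>
    ⟨List.replicate (n*p) ((1,0) : ℤ × ℤ) ++
      (List.ofFn fun i => ((1,0) : ℤ × ℤ) :: (f i).1).flatten, key f⟩
  have hFinj : Function.Injective F := by
    intro f g hfg
    have hval : (List.ofFn fun i => ((1,0) : ℤ × ℤ) :: (f i).1).flatten =
        (List.ofFn fun i => ((1,0) : ℤ × ℤ) :: (g i).1).flatten :=
      List.append_cancel_left (congrArg Subtype.val hfg)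
    have := QW.flatten_eq_of_fixed_length (n+1) _ _
      (by intro l hl; rw [List.mem_ofFn] at hl; obtain ⟨i, rfl⟩ := hl; exact hblocklen f i)
      (by intro l hl; rw [List.mem_ofFn] at hl; obtain ⟨i, rfl⟩ := hl; exact hblocklen g i)
      (by simp) hval
    rw [List.ofFn_inj] at this
    funext i
    have hi := congrFun this i
    simp only [List.cons.injEq] at hi
    exact Subtype.ext hi.2
  calc numPDquadEnd0 n ^ N = Nat.card P ^ N := rfl
    _ = Nat.card (Fin N → P) := by
        rw [Nat.card_fun]; simp
    _ ≤ Nat.card Q := Nat.card_le_card_of_injective F hFinj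
    _ = numPDasym p m := rfl
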